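/- arXiv:2009.08683 — 3 statements merged into one kernel-verified Lean document; each statement's English description precedes it below -/
import Mathlib

section
/- Let f(z) = Σ_{n=0}^∞ a_n z^n be analytic in the unit disk 𝔻 with |f(z)| < 1 for all z ∈ 𝔻. Then for all r with 0 ≤ r ≤ 1/3, the majorant series satisfies Σ_{n=0}^∞ |a_n| r^n ≤ 1. -/
open Complex Metric





lemma mobius_abs_lt {A w : ℂ} (hA : ‖A‖ < 1) (hw : ‖w‖ < 1) :
    ‖(A - w) / (1 - (starRingEnd ℂ) A * w)‖ < 1 := by
  have hd : ‖(starRingEnd ℂ) A * w‖ < 1 := by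
    rw [norm_mul, Complex.norm_conj]
    nlinarith [norm_nonneg A, norm_nonneg w]
  have hdne : (1 : ℂ) - (starRingEnd ℂ) A * w ≠ 0 := by
    intro h
    rw [sub_eq_zero] at h
    rw [← h] at hd; simp at hd
  have hpos : 0 < ‖1 - (starRingEnd ℂ) A * w‖ := norm_pos_iff.mpr hdne
  rw [norm_div, div_lt_one hpos]
  have h1 : Complex.normSq A < 1 := by rw [← Complex.sq_norm]; nlinarith [norm_nonneg A]
  have h2 : Complex.normSq w < 1 := by rw [← Complex.sq_norm]; nlinarith [norm_nonneg w]
  refine lt_of_pow_lt_pow_left₀ 2 hpos.le ?_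
  rw [Complex.sq_norm, Complex.sq_norm, Complex.normSq_sub, Complex.normSq_sub]
  have e1 : (starRingEnd ℂ) (((starRingEnd ℂ) A) * w) = A * (starRingEnd ℂ) w := by
    rw [map_mul, Complex.conj_conj]
  have e2 : Complex.normSq ((starRingEnd ℂ) A * w) = Complex.normSq A * Complex.normSq w := by
    rw [map_mul, Complex.normSq_conj]
  rw [e1, one_mul, e2, Complex.normSq_one]
  nlinarith [Complex.normSq_nonneg A, Complex.normSq_nonneg w]

lemma mobius_hasDerivAt {A : ℂ} (hA : ‖A‖ < 1) :
    HasDerivAt (fun w => (A - w) / (1 - (starRingEnd ℂ) A * w))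
      (-((1 : ℂ) - Complex.normSq A)⁻¹) A := by
  have hns : Complex.normSq A < 1 := by rw [← Complex.sq_norm]; nlinarith [norm_nonneg A]
  have hden : (1 : ℂ) - (starRingEnd ℂ) A * A ≠ 0 := by
    rw [mul_comm, Complex.mul_conj]
    intro h
    rw [sub_eq_zero] at h
    have := congrArg Complex.re h
    simp at this
    linarith
  have h1 : HasDerivAt (fun w : ℂ => A - w) (-1) A := by
    simpa using (hasDerivAt_id A).const_sub A
  have h2 : HasDerivAt (fun w : ℂ => (1 : ℂ) - (starRingEnd ℂ) A * w) (-((starRingEnd ℂ) A)) A := by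
    simpa using ((hasDerivAt_id A).const_mul ((starRingEnd ℂ) A)).const_sub 1
  have := h1.div h2 hden
  refine (this.congr_deriv ?_ :)
  symm
  have hne : ((1 : ℂ) - Complex.normSq A) ≠ 0 := by
    rwa [mul_comm, Complex.mul_conj] at hden
  rw [sub_self, mul_comm ((starRingEnd ℂ) A) A, Complex.mul_conj]
  field_simp
  ring

lemma rootOfUnity_sum (n : ℕ) (hn : 1 ≤ n) (j : ℕ) :
    ∑ k ∈ Finset.range n, (Complex.exp (2 * Real.pi * Complex.I / n) ^ j) ^ k
      = if n ∣ j then (n : ℂ) else 0 := by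
  have hn0 : (n : ℂ) ≠ 0 := Nat.cast_ne_zero.mpr (by omega)
  set ω := Complex.exp (2 * Real.pi * Complex.I / n) with hω
  have hpow : ∀ m : ℕ, ω ^ m = Complex.exp (m * (2 * Real.pi * Complex.I / n)) := by
    intro m; rw [← Complex.exp_nat_mul]
  have hpi : (2 * (Real.pi : ℂ) * Complex.I) ≠ 0 := by
    simp [Real.pi_ne_zero, Complex.I_ne_zero]
  have hxn : (ω ^ j) ^ n = 1 := by
    rw [← pow_mul, hpow]
    have h : ((j * n : ℕ) : ℂ) * (2 * Real.pi * Complex.I / n) =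
        ((j : ℤ) : ℂ) * (2 * Real.pi * Complex.I) := by
      push_cast; field_simp
    rw [h, Complex.exp_int_mul_two_pi_mul_I]
  by_cases hdvd : n ∣ j
  · obtain ⟨m, rfl⟩ := hdvd
    have h1 : ω ^ (n * m) = 1 := by
      rw [hpow]
      have h : ((n * m : ℕ) : ℂ) * (2 * Real.pi * Complex.I / n) =
          ((m : ℤ) : ℂ) * (2 * Real.pi * Complex.I) := by
        push_cast; field_simp
      rw [h, Complex.exp_int_mul_two_pi_mul_I]
    simp [h1, Dvd.intro m rfl]
  · have hx1 : ω ^ j ≠ 1 := by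
      intro h
      rw [hpow, Complex.exp_eq_one_iff] at h
      obtain ⟨k, hk⟩ := h
      have h3 : (j : ℂ) * (2 * Real.pi * Complex.I) = ((k : ℂ) * n) * (2 * Real.pi * Complex.I) := by
        have := congrArg (· * (n : ℂ)) hk
        field_simp at this
        linear_combination (2 * Real.pi * Complex.I) * this
      have h2 : (j : ℂ) = (k : ℂ) * n := mul_right_cancel₀ hpi h3
      have h4 : (j : ℤ) = k * n := by exact_mod_cast h2
      exact hdvd (Int.natCast_dvd_natCast.mp ⟨k, by linarith⟩)
    rw [geom_sum_eq hx1, hxn]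
    simp [hdvd]

lemma memball_of_abs_lt {z : ℂ} (hz : ‖z‖ < 1) : z ∈ Metric.ball (0 : ℂ) 1 := by
  simpa [Metric.mem_ball, Complex.dist_eq] using hz

lemma coeff_bound (a : ℕ → ℂ) (f : ℂ → ℂ)
    (hf : ∀ z ∈ Metric.ball (0 : ℂ) 1, HasSum (fun m => a m * z ^ m) (f z))
    (hb : ∀ z ∈ Metric.ball (0 : ℂ) 1, ‖f z‖ < 1)
    (n : ℕ) (hn : 1 ≤ n) :
    ‖a n‖ ≤ 1 - ‖a 0‖ ^ 2 := by
  have hn0 : n ≠ 0 := by omega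
  have hn0c : (n : ℂ) ≠ 0 := Nat.cast_ne_zero.mpr hn0
  -- f 0 = a 0
  have hf0 : f 0 = a 0 := by
    have h00 := hf 0 (memball_of_abs_lt (by simp))
    have heq : (fun m => a m * (0 : ℂ) ^ m) = (fun m => if m = 0 then a 0 else 0) := by
      funext m; cases m with
      | zero => simp
      | succ k => simp
    rw [heq] at h00
    exact h00.unique (hasSum_ite_eq 0 (a 0))
  have hA : ‖a 0‖ < 1 := by
    rw [← hf0]; exact hb 0 (memball_of_abs_lt (by simp))
  -- boundedness of coefficients at radius t
  have hsummR : ∀ t : ℝ, 0 ≤ t → t < 1 → ∃ C : ℝ, ∀ m, ‖a m‖ * t ^ m ≤ C := by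
    intro t ht0 ht1
    have htb : ‖((t : ℝ) : ℂ)‖ < 1 := by
      rwa [Complex.norm_real, Real.norm_eq_abs, _root_.abs_of_nonneg ht0]
    have hs := (hf _ (memball_of_abs_lt htb)).summable
    have h0 : Filter.Tendsto (fun m => ‖a m‖ * t ^ m) Filter.atTop (nhds 0) := by
      have h1 := (hs.tendsto_atTop_zero).norm
      rw [norm_zero] at h1
      refine h1.congr fun m => ?_
      simp [map_mul, map_pow, Complex.norm_real, Real.norm_eq_abs, _root_.abs_of_nonneg ht0]
    obtain ⟨C, hC⟩ := h0.bddAbove_range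
    exact ⟨C, fun m => hC (Set.mem_range_self m)⟩
  -- summability of the subseries in absolute value
  have hsumAbs : ∀ u : ℝ, 0 ≤ u → u < 1 →
      Summable (fun m => ‖a (n * m)‖ * u ^ m) := by
    intro u hu0 hu1
    set t : ℝ := ((1 + u) / 2) ^ ((n : ℝ)⁻¹) with htdef
    have hbase0 : (0 : ℝ) < (1 + u) / 2 := by linarith
    have hbase1 : (1 + u) / 2 < 1 := by linarith
    have ht0 : 0 < t := Real.rpow_pos_of_pos hbase0 _
    have ht1 : t < 1 := Real.rpow_lt_one hbase0.le hbase1 (by positivity)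
    have htn : t ^ n = (1 + u) / 2 := Real.rpow_inv_natCast_pow hbase0.le hn0
    obtain ⟨C, hC⟩ := hsummR t ht0.le ht1
    have hrat0 : 0 ≤ u / t ^ n := by positivity
    have hrat1 : u / t ^ n < 1 := by
      rw [htn, div_lt_one hbase0]; linarith
    refine Summable.of_nonneg_of_le (fun m => by positivity) (fun m => ?_)
      ((summable_geometric_of_lt_one hrat0 hrat1).mul_left C)
    have htnm : t ^ (n * m) ≠ 0 := by positivity
    have h1 : ‖a (n * m)‖ * u ^ m
        = (‖a (n * m)‖ * t ^ (n * m)) * (u / t ^ n) ^ m := by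
      rw [div_pow, ← pow_mul]
      field_simp
    rw [h1]
    exact mul_le_mul_of_nonneg_right (hC (n * m)) (by positivity)
  -- summability of the subseries, complex form
  have hsumC : ∀ w : ℂ, ‖w‖ < 1 → Summable (fun m => a (n * m) * w ^ m) := by
    intro w hw
    apply Summable.of_norm
    have := hsumAbs (‖w‖) (norm_nonneg w) hw
    refine this.congr fun m => ?_
    simp [map_mul, map_pow]
  -- the function h(w) = Σ a_{nm} w^m
  set F : ℂ → ℂ := fun w => ∑' m, a (n * m) * w ^ m with hFdef
  set q : FormalMultilinearSeries ℂ ℂ ℂ :=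
    FormalMultilinearSeries.ofScalars ℂ (fun m => a (n * m)) with hqdef
  have hps : HasFPowerSeriesOnBall F q 0 1 := by
    refine ⟨?_, one_pos, ?_⟩
    · refine ENNReal.le_of_forall_nnreal_lt fun ρ hρ => ?_
      apply q.le_radius_of_summable
      have hρ1 : (ρ : ℝ) < 1 := by exact_mod_cast hρ
      have := hsumAbs (ρ : ℝ) ρ.coe_nonneg hρ1
      refine this.congr fun m => ?_
      rw [hqdef, FormalMultilinearSeries.ofScalars_norm]
    · intro y hy
      have hy' : ‖y‖ < 1 := by
        rw [mem_emetric_ball_zero_iff] at hy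
        rwa [← ofReal_norm, ENNReal.ofReal_lt_one] at hy
      have hs := (hsumC y hy').hasSum
      simp only [zero_add]
      have heq : (fun m => q m fun _ => y) = fun m => a (n * m) * y ^ m := by
        funext m
        rw [hqdef, FormalMultilinearSeries.ofScalars_apply_eq, smul_eq_mul]
      rw [heq]
      exact hs
  -- differentiability, value and derivative at 0
  have hball : Metric.eball (0 : ℂ) 1 = Metric.ball (0 : ℂ) 1 := by
    rw [← Metric.emetric_ball (x := (0 : ℂ)) (ε := 1), ENNReal.ofReal_one]
  have hd : DifferentiableOn ℂ F (Metric.ball 0 1) := by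
    rw [← hball]; exact hps.differentiableOn
  have hF0 : F 0 = a 0 := by
    have hrfl : F 0 = ∑' m, a (n * m) * (0 : ℂ) ^ m := rfl
    rw [hrfl, tsum_eq_single 0 (fun m hm => by rw [zero_pow hm, mul_zero])]
    norm_num
  have hDA : HasDerivAt F (a n) 0 := by
    have h1 := hps.hasFPowerSeriesAt
    have h2 : deriv F 0 = q.coeff 1 := h1.deriv
    have h3 : q.coeff 1 = a n := by
      have hc : q.coeff 1 = q 1 (fun _ => 1) := rfl
      rw [hc, hqdef, FormalMultilinearSeries.ofScalars_apply_eq, smul_eq_mul, one_pow,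
        mul_one, Nat.mul_one]
    have h4 := h1.differentiableAt.hasDerivAt
    rwa [h2, h3] at h4
  -- |F w| < 1 on the ball, via averaging over roots of unity
  have hmem : ∀ w : ℂ, ‖w‖ < 1 → ‖F w‖ < 1 := by
    intro w hw
    -- nth root of w
    obtain ⟨z, hzn, hz1⟩ : ∃ z : ℂ, z ^ n = w ∧ ‖z‖ < 1 := by
      rcases eq_or_ne w 0 with rfl | hw0
      · exact ⟨0, by simp [zero_pow hn0], by simp⟩
      · refine ⟨Complex.exp (Complex.log w / n), ?_, ?_⟩
        · rw [← Complex.exp_nat_mul, mul_div_cancel₀ _ hn0c, Complex.exp_log hw0]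
        · rw [Complex.norm_exp]
          have hre : (Complex.log w / (n : ℂ)).re = Real.log (‖w‖) / n := by
            rw [Complex.div_natCast_re, Complex.log_re]
          rw [hre]
          have hlog : Real.log (‖w‖) < 0 :=
            Real.log_neg (norm_pos_iff.mpr hw0) hw
          exact Real.exp_lt_one_iff.mpr (div_neg_of_neg_of_pos hlog (by positivity))
    set ω : ℂ := Complex.exp (2 * Real.pi * Complex.I / n) with hωdef
    have hωabs : ‖ω‖ = 1 := by
      rw [hωdef, show (2 * (Real.pi : ℂ) * Complex.I / n) = ((2 * Real.pi / n : ℝ) : ℂ) * Complex.I by push_cast; ring]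
      exact Complex.norm_exp_ofReal_mul_I _
    -- LHS has-sum
    have H1 : HasSum (fun m => a (n * m) * w ^ m) (F w) := (hsumC w hw).hasSum
    have hfeq : (fun m => a (n * m) * w ^ m)
        = (fun j => (if n ∣ j then a j else 0) * z ^ j) ∘ (fun m => n * m) := by
      funext m
      simp only [Function.comp_apply, if_pos (Dvd.intro m rfl), ← hzn, ← pow_mul]
    rw [hfeq] at H1
    have hinj : Function.Injective (fun m => n * m) := fun x y hxy =>
      Nat.eq_of_mul_eq_mul_left (by omega) hxy
    have hvan : ∀ j ∉ Set.range (fun m => n * m),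
        (if n ∣ j then a j else 0) * z ^ j = 0 := by
      intro j hj
      rw [if_neg, zero_mul]
      rintro ⟨c, rfl⟩
      exact hj ⟨c, rfl⟩
    have H2 : HasSum (fun j => (if n ∣ j then a j else 0) * z ^ j) (F w) :=
      (hinj.hasSum_iff hvan).mp H1
    -- RHS has-sum
    have Hk : ∀ k ∈ Finset.range n,
        HasSum (fun j => a j * (ω ^ k * z) ^ j) (f (ω ^ k * z)) := by
      intro k _
      refine hf _ (memball_of_abs_lt ?_)
      rw [norm_mul, norm_pow, hωabs, one_pow, one_mul]
      exact hz1
    have HS := (hasSum_sum Hk).mul_left ((n : ℂ)⁻¹)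
    have hterm : ∀ j, (n : ℂ)⁻¹ * ∑ k ∈ Finset.range n, a j * (ω ^ k * z) ^ j
        = (if n ∣ j then a j else 0) * z ^ j := by
      intro j
      have hsumj : ∑ k ∈ Finset.range n, a j * (ω ^ k * z) ^ j
          = (∑ k ∈ Finset.range n, (ω ^ j) ^ k) * (a j * z ^ j) := by
        rw [Finset.sum_mul]
        refine Finset.sum_congr rfl fun k _ => ?_
        rw [mul_pow, ← pow_mul, pow_mul']
        ring
      rw [hsumj, rootOfUnity_sum n hn j]
      split_ifs with hdvd
      · rw [← mul_assoc, inv_mul_cancel₀ hn0c, one_mul]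
      · simp
    simp only [hterm] at HS
    have hFG := H2.unique HS
    rw [hFG, norm_mul, norm_inv, Complex.norm_natCast]
    have hsumlt : ∑ k ∈ Finset.range n, ‖f (ω ^ k * z)‖ < n := by
      calc ∑ k ∈ Finset.range n, ‖f (ω ^ k * z)‖
          < ∑ k ∈ Finset.range n, 1 := by
            refine Finset.sum_lt_sum_of_nonempty (Finset.nonempty_range_iff.mpr hn0)
              fun k _ => ?_
            refine hb _ (memball_of_abs_lt ?_)
            rw [norm_mul, norm_pow, hωabs, one_pow, one_mul]
            exact hz1
        _ = n := by simp
    have habsle : ‖∑ k ∈ Finset.range n, f (ω ^ k * z)‖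
        ≤ ∑ k ∈ Finset.range n, ‖f (ω ^ k * z)‖ :=
      norm_sum_le _ _
    have hnpos : (0 : ℝ) < n := by exact_mod_cast Nat.pos_of_ne_zero hn0
    calc (↑n)⁻¹ * ‖∑ k ∈ Finset.range n, f (ω ^ k * z)‖
        ≤ (↑n)⁻¹ * ∑ k ∈ Finset.range n, ‖f (ω ^ k * z)‖ := by
          exact mul_le_mul_of_nonneg_left habsle (by positivity)
      _ < (↑n)⁻¹ * n := by
          exact mul_lt_mul_of_pos_left hsumlt (by positivity)
      _ = 1 := inv_mul_cancel₀ hnpos.ne'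
  -- Schwarz lemma applied to the Möbius transform of F
  set φ : ℂ → ℂ := fun v => (a 0 - v) / (1 - (starRingEnd ℂ) (a 0) * v) with hφdef
  set G : ℂ → ℂ := fun x => φ (F x) with hGdef
  have hdenne : ∀ x ∈ Metric.ball (0 : ℂ) 1,
      (1 : ℂ) - (starRingEnd ℂ) (a 0) * F x ≠ 0 := by
    intro x hx
    have hFx : ‖F x‖ < 1 := hmem x (by simpa [Metric.mem_ball, Complex.dist_eq] using hx)
    have habs : ‖(starRingEnd ℂ) (a 0) * F x‖ < 1 := by
      rw [norm_mul, Complex.norm_conj]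
      nlinarith [norm_nonneg (a 0), norm_nonneg (F x)]
    intro hcon
    rw [sub_eq_zero] at hcon
    rw [← hcon] at habs
    simp at habs
  have hGd : DifferentiableOn ℂ G (Metric.ball 0 1) := by
    rw [hGdef, hφdef]
    exact DifferentiableOn.div ((differentiableOn_const _).sub hd)
      ((differentiableOn_const _).sub ((differentiableOn_const _).mul hd)) hdenne
  have hG0 : G 0 = 0 := by
    rw [hGdef, hφdef]
    simp only [hF0, sub_self, zero_div]
  have hmaps : Set.MapsTo G (Metric.ball 0 1) (Metric.ball (G 0) 1) := by
    intro x hx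
    rw [hG0, Metric.mem_ball, Complex.dist_eq, sub_zero]
    exact mobius_abs_lt hA (hmem x (by simpa [Metric.mem_ball, Complex.dist_eq] using hx))
  have hsch := Complex.norm_deriv_le_div_of_mapsTo_ball hGd (hmaps.mono_right Metric.ball_subset_closedBall) one_pos
  have hφD : HasDerivAt φ (-((1 : ℂ) - Complex.normSq (a 0))⁻¹) (F 0) := by
    rw [hF0]; exact mobius_hasDerivAt hA
  have hGD : HasDerivAt G ((-((1 : ℂ) - Complex.normSq (a 0))⁻¹) * a n) 0 :=
    HasDerivAt.comp 0 hφD hDA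
  rw [hGD.deriv] at hsch
  have hns : Complex.normSq (a 0) < 1 := by
    rw [← Complex.sq_norm]; nlinarith [norm_nonneg (a 0)]
  have habsval : ‖(-((1 : ℂ) - Complex.normSq (a 0))⁻¹) * a n‖
      = (1 - Complex.normSq (a 0))⁻¹ * ‖a n‖ := by
    rw [norm_mul, norm_neg, norm_inv]
    congr 2
    rw [show (1 : ℂ) - Complex.normSq (a 0) = ((1 - Complex.normSq (a 0) : ℝ) : ℂ) by push_cast; ring]
    rw [Complex.norm_real, Real.norm_eq_abs, _root_.abs_of_pos (by linarith)]
  rw [habsval] at hsch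
  have h1ns : (0 : ℝ) < 1 - Complex.normSq (a 0) := by linarith
  have hsch' : (1 - Complex.normSq (a 0))⁻¹ * ‖a n‖ ≤ 1 := by
    rw [div_self (one_ne_zero)] at hsch; exact hsch
  have hfin := mul_le_mul_of_nonneg_left hsch' h1ns.le
  rw [← mul_assoc, mul_inv_cancel₀ h1ns.ne', one_mul, mul_one] at hfin
  rw [Complex.sq_norm]
  linarith

/-- Bohr's inequality: if `f(z) = Σ aₙ zⁿ` on the unit disk with `|f| < 1`,
then `Σ |aₙ| rⁿ ≤ 1` for `0 ≤ r ≤ 1/3`. -/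
theorem bohr_inequality (a : ℕ → ℂ) (f : ℂ → ℂ)
    (hf : ∀ z ∈ Metric.ball (0 : ℂ) 1, HasSum (fun n => a n * z ^ n) (f z))
    (hb : ∀ z ∈ Metric.ball (0 : ℂ) 1, ‖f z‖ < 1)
    (r : ℝ) (hr0 : 0 ≤ r) (hr : r ≤ 1 / 3) :
    ∑' n : ℕ, ‖a n‖ * r ^ n ≤ 1 := by
  set α := ‖a 0‖ with hα
  have hα0 : 0 ≤ α := norm_nonneg _
  have hα1 : α < 1 := by
    have h00 := hf 0 (memball_of_abs_lt (by simp))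
    have heq : (fun m => a m * (0 : ℂ) ^ m) = (fun m => if m = 0 then a 0 else 0) := by
      funext m; cases m with
      | zero => simp
      | succ k => simp
    rw [heq] at h00
    have hval := h00.unique (hasSum_ite_eq 0 (a 0))
    rw [hα, ← hval]
    exact hb 0 (memball_of_abs_lt (by simp))
  have hr1 : r < 1 := by linarith
  have hα2 : 0 ≤ 1 - α ^ 2 := by nlinarith
  have hcb : ∀ m, 1 ≤ m → ‖a m‖ ≤ 1 - α ^ 2 :=
    fun m hm => coeff_bound a f hf hb m hm
  set b : ℕ → ℝ := fun m => if m = 0 then α else (1 - α ^ 2) * r ^ m with hbdef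
  have hble : ∀ m, ‖a m‖ * r ^ m ≤ b m := by
    intro m
    cases m with
    | zero => simp [hbdef, hα]
    | succ k =>
      simp only [hbdef, if_neg (Nat.succ_ne_zero k)]
      exact mul_le_mul_of_nonneg_right (hcb _ (by omega)) (by positivity)
  have hbsum : Summable b := by
    refine Summable.of_nonneg_of_le (fun m => ?_) (fun m => ?_)
      (summable_geometric_of_lt_one hr0 hr1)
    · cases m with
      | zero => simpa [hbdef] using hα0
      | succ k =>
        simp only [hbdef, if_neg (Nat.succ_ne_zero k)]
        exact mul_nonneg hα2 (by positivity)
    · cases m with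
      | zero => simp only [hbdef, if_pos rfl, pow_zero]; linarith
      | succ k =>
        simp only [hbdef, if_neg (Nat.succ_ne_zero k)]
        calc (1 - α ^ 2) * r ^ (k + 1) ≤ 1 * r ^ (k + 1) :=
              mul_le_mul_of_nonneg_right (by nlinarith) (by positivity)
          _ = r ^ (k + 1) := one_mul _
  have hsum : Summable (fun m => ‖a m‖ * r ^ m) :=
    Summable.of_nonneg_of_le (fun m => by positivity) hble hbsum
  have h1 : ∑' m, ‖a m‖ * r ^ m ≤ ∑' m, b m := Summable.tsum_le_tsum hble hsum hbsum
  have hgeo : ∑' k : ℕ, r ^ (k + 1) = r * (1 - r)⁻¹ := by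
    have hfun : (fun k : ℕ => r ^ (k + 1)) = fun k => r * r ^ k := by
      funext k; ring
    rw [hfun, tsum_mul_left, tsum_geometric_of_lt_one hr0 hr1]
  have h2 : ∑' m, b m = α + (1 - α ^ 2) * (r * (1 - r)⁻¹) := by
    rw [hbsum.tsum_eq_zero_add]
    have hb0 : b 0 = α := by simp [hbdef]
    have hbs : (fun k : ℕ => b (k + 1)) = fun k => (1 - α ^ 2) * r ^ (k + 1) := by
      funext k; simp [hbdef]
    rw [hb0, hbs, tsum_mul_left, hgeo]
  rw [h2] at h1
  have hr2 : r * (1 - r)⁻¹ ≤ 1 / 2 := by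
    rw [← div_eq_mul_inv, div_le_div_iff₀ (by linarith) (by norm_num)]
    linarith
  have h3 : (1 - α ^ 2) * (r * (1 - r)⁻¹) ≤ (1 - α ^ 2) * (1 / 2) :=
    mul_le_mul_of_nonneg_left hr2 hα2
  nlinarith [sq_nonneg (1 - α)]
end

section
/- Let h, g be analytic on 𝔻 with g'(z) = α z h'(z) for all z ∈ 𝔻, where |α| ≤ 1, and suppose K'(-|z|) ≤ |h'(z)| ≤ K'(|z|) for a fixed function K : (-1,1) → ℝ differentiable with K' > 0. Then for the harmonic map f = h + conj(g) and |z| = r < 1, one has |f(z)| ≤ K(r) - K(0) + |α| ∫₀^r t K'(t) dt, where the upper bound is obtained by integrating |h'| + |g'| along the segment from 0 to z. -/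
open Complex Metric intervalIntegral

set_option maxHeartbeats 1000000 in
/-- Growth upper bound for the harmonic map `f = h + conj g` with dilation
`g' = α z h'`, when `K'(-|z|) ≤ |h'(z)| ≤ K'(|z|)`. -/
theorem harmonic_growth_upper (h g : ℂ → ℂ) (α : ℂ) (K : ℝ → ℝ)
    (hα : ‖α‖ ≤ 1)
    (hh : DifferentiableOn ℂ h (ball (0 : ℂ) 1))
    (hg : DifferentiableOn ℂ g (ball (0 : ℂ) 1))
    (h0 : h 0 = 0) (g0 : g 0 = 0)
    (hdil : ∀ z ∈ ball (0 : ℂ) 1, deriv g z = α * z * deriv h z)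
    (hK : ∀ t ∈ Set.Ioo (-1 : ℝ) 1, DifferentiableAt ℝ K t)
    (hKpos : ∀ t ∈ Set.Ioo (-1 : ℝ) 1, 0 < deriv K t)
    (hbound : ∀ z ∈ ball (0 : ℂ) 1,
      deriv K (-‖z‖) ≤ ‖deriv h z‖ ∧
      ‖deriv h z‖ ≤ deriv K (‖z‖))
    (z : ℂ) (hz : z ∈ ball (0 : ℂ) 1) :
    ‖h z + (starRingEnd ℂ) (g z)‖ ≤
      K (‖z‖) - K 0 +
        ‖α‖ * ∫ t in (0 : ℝ)..(‖z‖), t * deriv K t := by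
  rcases eq_or_ne z 0 with rfl | hz0
  · simp [h0, g0]
  set r : ℝ := ‖z‖ with hr
  have hr0 : 0 < r := by rw [hr]; exact norm_pos_iff.mpr hz0
  have hr1 : r < 1 := by simpa [hr, Complex.dist_eq] using mem_ball.1 hz
  -- unit direction
  set e : ℂ := (r : ℂ)⁻¹ * z with he
  have habse : ‖e‖ = 1 := by
    rw [he, norm_mul, norm_inv, Complex.norm_real, Real.norm_eq_abs, abs_of_pos hr0, ← hr,
      inv_mul_cancel₀ hr0.ne']
  have hre : (r : ℂ) * e = z := by
    rw [he, ← mul_assoc, mul_inv_cancel₀ (by exact_mod_cast hr0.ne'), one_mul]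
  have habsw : ∀ s : ℝ, 0 ≤ s → ‖(s : ℂ) * e‖ = s := by
    intro s hs
    rw [norm_mul, habse, mul_one, Complex.norm_real, Real.norm_eq_abs, _root_.abs_of_nonneg hs]
  -- points on the segment lie in the ball
  have hmem : ∀ s : ℝ, s ∈ Set.Icc (0 : ℝ) r → (s : ℂ) * e ∈ ball (0 : ℂ) 1 := by
    intro s hs
    rw [mem_ball, Complex.dist_eq, sub_zero, habsw s hs.1]
    exact lt_of_le_of_lt hs.2 hr1
  -- subset of Ioo (-1,1)
  have hIccsub : Set.Icc (0 : ℝ) r ⊆ Set.Ioo (-1 : ℝ) 1 := fun s hs =>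
    ⟨by linarith [hs.1], lt_of_le_of_lt hs.2 hr1⟩
  -- continuity of deriv h on the ball
  have hderivh_cont : ContinuousOn (deriv h) (ball (0 : ℂ) 1) :=
    ((hh.analyticOnNhd isOpen_ball).deriv).continuousOn
  have hwcont : ContinuousOn (fun s : ℝ => (s : ℂ) * e) (Set.Icc 0 r) :=
    (Complex.continuous_ofReal.mul continuous_const).continuousOn
  have hucont : ContinuousOn (fun s : ℝ => deriv h ((s : ℂ) * e)) (Set.Icc 0 r) :=
    hderivh_cont.comp hwcont hmem
  -- derivative of s ↦ h(s e)
  have hHderiv : ∀ s ∈ Set.Icc (0 : ℝ) r,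
      HasDerivAt (fun t : ℝ => h ((t : ℂ) * e)) (deriv h ((s : ℂ) * e) * e) s := by
    intro s hs
    have h1 : HasDerivAt h (deriv h ((s : ℂ) * e)) ((s : ℂ) * e) :=
      (hh.differentiableAt (isOpen_ball.mem_nhds (hmem s hs))).hasDerivAt
    have h2 : HasDerivAt (fun w : ℂ => w * e) e ((s : ℂ)) := by
      simpa using (hasDerivAt_id ((s:ℂ))).mul_const e
    have h3 : HasDerivAt (fun w : ℂ => h (w * e)) (deriv h ((s : ℂ) * e) * e) ((s : ℂ)) := by
      exact HasDerivAt.comp (s : ℂ) h1 h2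
    exact h3.comp_ofReal
  have hGderiv : ∀ s ∈ Set.Icc (0 : ℝ) r,
      HasDerivAt (fun t : ℝ => g ((t : ℂ) * e)) (deriv g ((s : ℂ) * e) * e) s := by
    intro s hs
    have h1 : HasDerivAt g (deriv g ((s : ℂ) * e)) ((s : ℂ) * e) :=
      (hg.differentiableAt (isOpen_ball.mem_nhds (hmem s hs))).hasDerivAt
    have h2 : HasDerivAt (fun w : ℂ => w * e) e ((s : ℂ)) := by
      simpa using (hasDerivAt_id ((s:ℂ))).mul_const e
    have h3 : HasDerivAt (fun w : ℂ => g (w * e)) (deriv g ((s : ℂ) * e) * e) ((s : ℂ)) := by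
      exact HasDerivAt.comp (s : ℂ) h1 h2
    exact h3.comp_ofReal
  have hIccuIcc : Set.uIcc (0 : ℝ) r = Set.Icc 0 r := Set.uIcc_of_le hr0.le
  -- the derivative of g along the segment, rewritten
  have hgd : ∀ s ∈ Set.Icc (0 : ℝ) r,
      deriv g ((s : ℂ) * e) = α * ((s : ℂ) * e) * deriv h ((s : ℂ) * e) :=
    fun s hs => hdil _ (hmem s hs)
  have hgcont : ContinuousOn (fun s : ℝ => deriv g ((s : ℂ) * e)) (Set.Icc 0 r) := by
    apply ContinuousOn.congr (f := fun s : ℝ => α * ((s : ℂ) * e) * deriv h ((s : ℂ) * e))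
    · exact (continuousOn_const.mul hwcont).mul hucont
    · exact hgd
  -- integrability
  have hint_h : IntervalIntegrable (fun s : ℝ => deriv h ((s : ℂ) * e) * e) MeasureTheory.volume 0 r :=
    ((hucont.mul continuousOn_const).mono (by rw [hIccuIcc])).intervalIntegrable
  have hint_g : IntervalIntegrable (fun s : ℝ => deriv g ((s : ℂ) * e) * e) MeasureTheory.volume 0 r :=
    ((hgcont.mul continuousOn_const).mono (by rw [hIccuIcc])).intervalIntegrable
  -- FTC for h and g along the segment
  have hFTCh : (∫ s in (0 : ℝ)..r, deriv h ((s : ℂ) * e) * e) = h z := by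
    rw [integral_eq_sub_of_hasDerivAt (fun s hs => hHderiv s (by rwa [← hIccuIcc])) hint_h]
    simp [hre, h0]
  have hFTCg : (∫ s in (0 : ℝ)..r, deriv g ((s : ℂ) * e) * e) = g z := by
    rw [integral_eq_sub_of_hasDerivAt (fun s hs => hGderiv s (by rwa [← hIccuIcc])) hint_g]
    simp [hre, g0]
  -- integrability of deriv K on [0, r]
  have hKderivAt : ∀ x ∈ Set.Ioo (0 : ℝ) r, HasDerivAt K (deriv K x) x := fun x hx =>
    (hK x (hIccsub ⟨hx.1.le, hx.2.le⟩)).hasDerivAt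
  have hKcont : ContinuousOn K (Set.Icc 0 r) := fun x hx =>
    ((hK x (hIccsub hx)).continuousAt).continuousWithinAt
  have hKint : IntervalIntegrable (deriv K) MeasureTheory.volume 0 r := by
    apply intervalIntegrable_deriv_of_nonneg (g := K)
    · rwa [hIccuIcc]
    · simpa [hr0.le, min_eq_left, max_eq_right] using hKderivAt
    · intro x hx
      rw [min_eq_left hr0.le, max_eq_right hr0.le] at hx
      exact (hKpos x (hIccsub ⟨hx.1.le, hx.2.le⟩)).le
  -- bound for |h z|
  have hucont' : ContinuousOn (fun s : ℝ => ‖deriv h ((s : ℂ) * e)‖) (Set.Icc 0 r) :=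
    continuous_norm.comp_continuousOn hucont
  have hub : ∀ s ∈ Set.Icc (0 : ℝ) r,
      ‖deriv h ((s : ℂ) * e)‖ ≤ deriv K s := by
    intro s hs
    have := (hbound _ (hmem s hs)).2
    rwa [habsw s hs.1] at this
  have habs_h : ‖h z‖ ≤ K r - K 0 := by
    rw [← hFTCh]
    calc ‖∫ s in (0 : ℝ)..r, deriv h ((s : ℂ) * e) * e‖
        ≤ ∫ s in (0 : ℝ)..r, ‖deriv h ((s : ℂ) * e) * e‖ := by
          exact
            intervalIntegral.norm_integral_le_integral_norm (f := fun s : ℝ => deriv h ((s : ℂ) * e) * e) hr0.le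
      _ ≤ ∫ s in (0 : ℝ)..r, deriv K s := by
          apply intervalIntegral.integral_mono_on hr0.le _ hKint
          · intro s hs
            rw [norm_mul, habse, mul_one]
            exact hub s hs
          · exact ((continuous_norm.comp_continuousOn
              (hucont.mul continuousOn_const)).mono (by rw [hIccuIcc])).intervalIntegrable
      _ ≤ K r - K 0 := by
          apply integral_le_sub_of_hasDeriv_right_of_le hr0.le hKcont
            (fun x hx => (hKderivAt x hx).hasDerivWithinAt)
            ((intervalIntegrable_iff_integrableOn_Icc_of_le hr0.le).1 hKint)
            (fun x _ => le_rfl)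
  -- bound for |g z|
  have habs_g : ‖g z‖ ≤ ‖α‖ * ∫ t in (0 : ℝ)..r, t * deriv K t := by
    rw [← hFTCg]
    have hKtint : IntervalIntegrable (fun t : ℝ => ‖α‖ * (t * deriv K t))
        MeasureTheory.volume 0 r := by
      have h1 := hKint.continuousOn_mul (g := fun t : ℝ => ‖α‖ * t)
        ((continuous_const.mul continuous_id).continuousOn)
      simpa [mul_assoc] using h1
    calc ‖∫ s in (0 : ℝ)..r, deriv g ((s : ℂ) * e) * e‖
        ≤ ∫ s in (0 : ℝ)..r, ‖deriv g ((s : ℂ) * e) * e‖ := by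
          exact
            intervalIntegral.norm_integral_le_integral_norm (f := fun s : ℝ => deriv g ((s : ℂ) * e) * e) hr0.le
      _ ≤ ∫ s in (0 : ℝ)..r, ‖α‖ * (s * deriv K s) := by
          apply intervalIntegral.integral_mono_on hr0.le _ hKtint
          · intro s hs
            rw [norm_mul, habse, mul_one, hgd s hs, norm_mul, norm_mul, habsw s hs.1]
            rw [mul_assoc]
            exact mul_le_mul_of_nonneg_left
              (mul_le_mul_of_nonneg_left (hub s hs) hs.1) (by positivity)
          · exact ((continuous_norm.comp_continuousOn
              (hgcont.mul continuousOn_const)).mono (by rw [hIccuIcc])).intervalIntegrable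
      _ = ‖α‖ * ∫ t in (0 : ℝ)..r, t * deriv K t := by
          rw [← intervalIntegral.integral_const_mul]
  -- put everything together
  calc ‖h z + (starRingEnd ℂ) (g z)‖
      ≤ ‖h z‖ + ‖(starRingEnd ℂ) (g z)‖ := norm_add_le _ _
    _ = ‖h z‖ + ‖g z‖ := by rw [Complex.norm_conj]
    _ ≤ K r - K 0 + ‖α‖ * ∫ t in (0 : ℝ)..r, t * deriv K t :=
        add_le_add habs_h habs_g
end

section
/- Let K' : [0,1) → ℝ be continuous and satisfy K'(t) ≥ c > 0, and suppose h is analytic on 𝔻 with K'(-|z|) ≤ |h'(z)| ≤ K'(|z|) where K' is extended to (-1,1). For f = h + conj(g) with g' = α z h' and |α| ≤ 1, the area S_r of f(𝔻_r) satisfies 2π ∫₀^r t(1-|α|²t²)(K'(-t))² dt ≤ S_r ≤ 2π ∫₀^r t(1-|α|²t²)(K'(t))² dt, where S_r = ∬_{𝔻_r} (|h'(z)|² - |g'(z)|²) dx dy. -/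
open Metric MeasureTheory Real

lemma polar_aux (φ : ℝ → ℝ) (r : ℝ) (hr : 0 < r) :
    ∫ z in ball (0:ℂ) r, φ (‖z‖) = 2 * π * ∫ t in (0:ℝ)..r, t * φ t := by
  have h1 : ∫ z in ball (0:ℂ) r, φ (‖z‖)
      = ∫ z : ℂ, (Set.Iio r).indicator φ ‖z‖ := by
    rw [← integral_indicator measurableSet_ball]
    congr 1
    ext z
    by_cases hz : z ∈ ball (0:ℂ) r
    · rw [Set.indicator_of_mem hz,
        Set.indicator_of_mem (show ‖z‖ ∈ Set.Iio r from by
          simpa using mem_ball_zero_iff.mp hz)]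
    · rw [Set.indicator_of_notMem hz, Set.indicator_of_notMem]
      simpa [mem_ball_zero_iff] using hz
  rw [h1, integral_fun_norm_addHaar volume ((Set.Iio r).indicator φ)]
  have hdim : Module.finrank ℝ ℂ = 2 := Complex.finrank_real_complex
  rw [hdim]
  have hvol : volume.real (ball (0:ℂ) 1) = π := by
    simp [Measure.real, Complex.volume_ball]
  rw [hvol]
  have h2 : ∫ y in Set.Ioi (0:ℝ), y ^ (2-1) • (Set.Iio r).indicator φ y
      = ∫ t in (0:ℝ)..r, t * φ t := by
    have : ∀ y : ℝ, y ^ (2-1) • (Set.Iio r).indicator φ y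
        = (Set.Iio r).indicator (fun t => t * φ t) y := by
      intro y
      by_cases hy : y ∈ Set.Iio r <;>
        simp [Set.indicator_of_mem, Set.indicator_of_notMem, hy]
    simp_rw [this]
    rw [setIntegral_indicator measurableSet_Iio]
    have : Set.Ioi (0:ℝ) ∩ Set.Iio r = Set.Ioo 0 r := Set.Ioi_inter_Iio
    rw [this, intervalIntegral.integral_of_le hr.le, ← integral_Ioc_eq_integral_Ioo]
  rw [h2]
  simp [smul_eq_mul]
  ring

/-- Area bounds for the image of `𝔻_r` under the harmonic map `f = h + conj g`
with dilation `g' = α z h'`, where `K'(-|z|) ≤ |h'(z)| ≤ K'(|z|)`. -/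
theorem area_bounds (h g : ℂ → ℂ) (α : ℂ) (K' : ℝ → ℝ) (c : ℝ)
    (hα : ‖α‖ ≤ 1)
    (hh : DifferentiableOn ℂ h (ball (0 : ℂ) 1))
    (hg : DifferentiableOn ℂ g (ball (0 : ℂ) 1))
    (hdil : ∀ z ∈ ball (0 : ℂ) 1, deriv g z = α * z * deriv h z)
    (hc : 0 < c)
    (hK'cont : ContinuousOn K' (Set.Ioo (-1 : ℝ) 1))
    (hK'pos : ∀ t ∈ Set.Ioo (-1 : ℝ) 1, c ≤ K' t)
    (hbound : ∀ z ∈ ball (0 : ℂ) 1,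
      K' (-‖z‖) ≤ ‖deriv h z‖ ∧
      ‖deriv h z‖ ≤ K' (‖z‖))
    (r : ℝ) (hr0 : 0 < r) (hr1 : r < 1) :
    2 * π * ∫ t in (0 : ℝ)..r,
        t * (1 - ‖α‖ ^ 2 * t ^ 2) * (K' (-t)) ^ 2 ≤
      (∫ z in ball (0 : ℂ) r,
        (‖deriv h z‖ ^ 2 - ‖deriv g z‖ ^ 2)) ∧
    (∫ z in ball (0 : ℂ) r,
        (‖deriv h z‖ ^ 2 - ‖deriv g z‖ ^ 2)) ≤
      2 * π * ∫ t in (0 : ℝ)..r,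
        t * (1 - ‖α‖ ^ 2 * t ^ 2) * (K' t) ^ 2 := by
  set φL : ℝ → ℝ := fun t => (1 - ‖α‖ ^ 2 * t ^ 2) * (K' (-t)) ^ 2 with hφL
  set φU : ℝ → ℝ := fun t => (1 - ‖α‖ ^ 2 * t ^ 2) * (K' t) ^ 2 with hφU
  set u : ℂ → ℝ := fun z => ‖deriv h z‖ ^ 2 - ‖deriv g z‖ ^ 2 with hu
  have hcb : closedBall (0:ℂ) r ⊆ ball 0 1 := closedBall_subset_ball hr1
  have hbb : ball (0:ℂ) r ⊆ ball 0 1 := ball_subset_ball hr1.le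
  -- continuity of derivatives
  have hch : ContinuousOn (deriv h) (ball (0:ℂ) 1) :=
    ((hh.analyticOnNhd isOpen_ball).deriv).continuousOn
  have hcg : ContinuousOn (deriv g) (ball (0:ℂ) 1) :=
    ((hg.analyticOnNhd isOpen_ball).deriv).continuousOn
  have hcu : ContinuousOn u (closedBall (0:ℂ) r) := by
    apply ContinuousOn.sub
    · exact ((continuous_norm.comp_continuousOn (hch.mono hcb)).pow 2)
    · exact ((continuous_norm.comp_continuousOn (hcg.mono hcb)).pow 2)
  have hiu : IntegrableOn u (ball (0:ℂ) r) :=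
    (hcu.integrableOn_compact (isCompact_closedBall _ _)).mono_set ball_subset_closedBall
  -- the map z ↦ -|z| and z ↦ |z| land in Ioo (-1) 1 on the closed ball
  have hmemneg : ∀ z ∈ closedBall (0:ℂ) r, -‖z‖ ∈ Set.Ioo (-1:ℝ) 1 := by
    intro z hz
    have h1 : ‖z‖ ≤ r := by simpa using mem_closedBall_zero_iff.mp hz
    constructor <;> nlinarith [norm_nonneg z]
  have hmempos : ∀ z ∈ closedBall (0:ℂ) r, ‖z‖ ∈ Set.Ioo (-1:ℝ) 1 := by
    intro z hz
    have h1 : ‖z‖ ≤ r := by simpa using mem_closedBall_zero_iff.mp hz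
    constructor <;> nlinarith [norm_nonneg z]
  have habs : ContinuousOn (fun z : ℂ => ‖z‖) (closedBall (0:ℂ) r) :=
    continuous_norm.continuousOn
  have hcL : ContinuousOn (fun z : ℂ => φL (‖z‖)) (closedBall (0:ℂ) r) := by
    apply ContinuousOn.mul
    · exact (continuousOn_const.sub (continuousOn_const.mul (habs.pow 2)))
    · exact ((hK'cont.comp habs.neg hmemneg).pow 2)
  have hcU : ContinuousOn (fun z : ℂ => φU (‖z‖)) (closedBall (0:ℂ) r) := by
    apply ContinuousOn.mul
    · exact (continuousOn_const.sub (continuousOn_const.mul (habs.pow 2)))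
    · exact ((hK'cont.comp habs hmempos).pow 2)
  have hiL : IntegrableOn (fun z : ℂ => φL (‖z‖)) (ball (0:ℂ) r) :=
    (hcL.integrableOn_compact (isCompact_closedBall _ _)).mono_set ball_subset_closedBall
  have hiU : IntegrableOn (fun z : ℂ => φU (‖z‖)) (ball (0:ℂ) r) :=
    (hcU.integrableOn_compact (isCompact_closedBall _ _)).mono_set ball_subset_closedBall
  -- pointwise bounds
  have hpt : ∀ z ∈ ball (0:ℂ) r,
      φL (‖z‖) ≤ u z ∧ u z ≤ φU (‖z‖) := by
    intro z hz
    have hz1 : z ∈ ball (0:ℂ) 1 := hbb hz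
    have hz1' : ‖z‖ < 1 := by simpa using mem_ball_zero_iff.mp hz1
    have hgz : ‖deriv g z‖ ^ 2
        = ‖α‖ ^ 2 * ‖z‖ ^ 2 * ‖deriv h z‖ ^ 2 := by
      rw [hdil z hz1]
      simp [norm_mul]
      ring
    have huz : u z = (1 - ‖α‖ ^ 2 * ‖z‖ ^ 2) * ‖deriv h z‖ ^ 2 := by
      rw [hu]; simp only; rw [hgz]; ring
    have hfac : 0 ≤ 1 - ‖α‖ ^ 2 * ‖z‖ ^ 2 := by
      have h1 : ‖α‖ ^ 2 ≤ 1 := by nlinarith [norm_nonneg α]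
      have h2 : ‖z‖ ^ 2 ≤ 1 := by nlinarith [norm_nonneg z]
      nlinarith [mul_le_mul h1 h2 (sq_nonneg (‖z‖)) zero_le_one]
    obtain ⟨hlo, hhi⟩ := hbound z hz1
    have hKpos : 0 ≤ K' (-‖z‖) :=
      le_trans hc.le (hK'pos _ (hmemneg z (ball_subset_closedBall hz)))
    have hsq1 : K' (-‖z‖) ^ 2 ≤ ‖deriv h z‖ ^ 2 :=
      pow_le_pow_left₀ hKpos hlo 2
    have hsq2 : ‖deriv h z‖ ^ 2 ≤ K' (‖z‖) ^ 2 :=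
      pow_le_pow_left₀ (norm_nonneg _) hhi 2
    rw [huz]
    constructor
    · exact mul_le_mul_of_nonneg_left hsq1 hfac
    · exact mul_le_mul_of_nonneg_left hsq2 hfac
  have hpolL : ∫ z in ball (0:ℂ) r, φL (‖z‖)
      = 2 * π * ∫ t in (0:ℝ)..r, t * (1 - ‖α‖ ^ 2 * t ^ 2) * (K' (-t)) ^ 2 := by
    rw [polar_aux φL r hr0]
    congr 1
    apply intervalIntegral.integral_congr
    intro t _
    simp [hφL]; ring
  have hpolU : ∫ z in ball (0:ℂ) r, φU (‖z‖)
      = 2 * π * ∫ t in (0:ℝ)..r, t * (1 - ‖α‖ ^ 2 * t ^ 2) * (K' t) ^ 2 := by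
    rw [polar_aux φU r hr0]
    congr 1
    apply intervalIntegral.integral_congr
    intro t _
    simp [hφU]; ring
  constructor
  · rw [← hpolL]
    exact setIntegral_mono_on hiL hiu measurableSet_ball (fun z hz => (hpt z hz).1)
  · rw [← hpolU]
    exact setIntegral_mono_on hiu hiU measurableSet_ball (fun z hz => (hpt z hz).2)
end
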